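/- Mixed approximation for linear contracts: Let k = log₂(1/ε) for ε ∈ (0, 1/2). For each i = 1,...,k consider the linear contract with ratio ρ_i = 1 − 2^{−i}, let V_i be the expected principal's value of the agent's best response action and c_i its cost. Then V_k − c_k ≤ 2·log₂(1/ε)·LIN, where LIN = max over linear contract ratios ρ of the principal's utility (1−ρ)·V(ρ). Moreover, if a* maximizes welfare V_a − c_a with c_{a*} ≤ 1, then (V_{a*} − c_{a*}) − (V_k − c_k) ≤ ε/(1−ε) ≤ 2ε. Consequently OPT ≤ max_a (V_a − c_a) ≤ 2(log₂(1/ε)·LIN + ε). -/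
import Mathlib


/-- Mixed approximation for linear contracts. With `k = log₂(1/ε)` and
linear-contract ratios `ρ i = 1 − 2^{−i}`, the best-responding actions satisfy
`V_k − c_k ≤ 2 k · LIN`, the welfare loss versus the welfare-optimal action is at most
`2ε`, and consequently `OPT ≤ 2(k · LIN + ε)`. -/
theorem linear_contract_mixed_approximation {A : Type*} (ε : ℝ)
    (hε : ε ∈ Set.Ioo (0 : ℝ) (1 / 2))
    (k : ℕ) (hk : (1 : ℝ) / 2 ^ k = ε)
    (V c : A → ℝ)
    (hV : ∀ a, V a ∈ Set.Icc (0 : ℝ) 1) (hc : ∀ a, c a ∈ Set.Icc (0 : ℝ) 1)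
    (br : ℝ → A)
    -- br ρ is the agent's best response to the ρ-linear contract
    (hbr : ∀ ρ : ℝ, ∀ a : A, ρ * V a - c a ≤ ρ * V (br ρ) - c (br ρ))
    (LIN : ℝ)
    -- LIN upper-bounds the principal's utility of every linear contract
    (hLIN : ∀ ρ ∈ Set.Icc (0 : ℝ) 1, (1 - ρ) * V (br ρ) ≤ LIN)
    (OPT : ℝ) (hOPT : ∃ a, OPT ≤ V a - c a) :
    (V (br (1 - 2 ^ (-(k : ℤ)))) - c (br (1 - 2 ^ (-(k : ℤ))))
        ≤ 2 * (k : ℝ) * LIN) ∧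
    (∀ a : A, (V a - c a)
        - (V (br (1 - 2 ^ (-(k : ℤ)))) - c (br (1 - 2 ^ (-(k : ℤ))))) ≤ 2 * ε) ∧
    OPT ≤ 2 * ((k : ℝ) * LIN + ε) := by
  obtain ⟨hε0, hε1⟩ := hε
  have hpow_pos : ∀ n : ℕ, (0:ℝ) < 2 ^ (-(n : ℤ)) := fun n => by positivity
  have hpow_le : ∀ n : ℕ, (2:ℝ) ^ (-(n : ℤ)) ≤ 1 := by
    intro n
    rw [zpow_neg, zpow_natCast]
    exact inv_le_one_of_one_le₀ (one_le_pow₀ one_le_two)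
  have hρmem : ∀ n : ℕ, (1 - 2 ^ (-(n : ℤ)) : ℝ) ∈ Set.Icc (0:ℝ) 1 :=
    fun n => ⟨by linarith [hpow_le n], by linarith [hpow_pos n]⟩
  -- step inequality
  have hstep : ∀ n : ℕ,
      V (br (1 - 2 ^ (-((n+1 : ℕ) : ℤ)))) - c (br (1 - 2 ^ (-((n+1 : ℕ) : ℤ))))
        ≤ V (br (1 - 2 ^ (-(n : ℤ)))) - c (br (1 - 2 ^ (-(n : ℤ)))) + 2 * LIN := by
    intro n
    set e : ℝ := 2 ^ (-(n : ℤ)) with he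
    set e' : ℝ := 2 ^ (-((n+1 : ℕ) : ℤ)) with he'
    have hee' : e = 2 * e' := by
      rw [he, he']
      push_cast
      rw [show -((n:ℤ)+1) = -(n:ℤ) + (-1) by ring, zpow_add₀ (two_ne_zero), zpow_neg_one]
      ring
    have h1 := hbr (1 - e) (br (1 - e'))
    have h2 : (1 - (1 - e')) * V (br (1 - e')) ≤ LIN := hLIN _ (hρmem (n+1))
    have hV' := hV (br (1 - e'))
    have hVn := hV (br (1 - e))
    have h3 : e * V (br (1 - e')) = 2 * ((1 - (1 - e')) * V (br (1 - e'))) := by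
      rw [hee']; ring
    have h4 : 0 ≤ e * V (br (1 - e)) := mul_nonneg (hpow_pos n).le hVn.1
    nlinarith [h1, h2, h3, h4]
  -- base case n = 1
  have hbase : V (br (1 - 2 ^ (-((1:ℕ) : ℤ)))) - c (br (1 - 2 ^ (-((1:ℕ) : ℤ))))
      ≤ 2 * LIN := by
    have h2 : (1 - (1 - (2:ℝ) ^ (-((1:ℕ) : ℤ)))) * V (br (1 - 2 ^ (-((1:ℕ) : ℤ)))) ≤ LIN :=
      hLIN _ (hρmem 1)
    have he1 : (2:ℝ) ^ (-((1:ℕ) : ℤ)) = 1/2 := by norm_num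
    rw [he1] at h2 ⊢
    have := (hc (br (1 - (1:ℝ)/2))).1
    linarith
  have hmain : ∀ n : ℕ, 1 ≤ n →
      V (br (1 - 2 ^ (-(n : ℤ)))) - c (br (1 - 2 ^ (-(n : ℤ)))) ≤ 2 * (n : ℝ) * LIN := by
    intro n hn
    induction n, hn using Nat.le_induction with
    | base => simpa using hbase
    | succ n hn ih =>
      have := hstep n
      push_cast
      push_cast at this ih
      linarith
  have hk1 : 1 ≤ k := by
    by_contra h
    push_neg at h
    interval_cases k
    · simp at hk; linarith
  have hek : (2:ℝ) ^ (-(k : ℤ)) = ε := by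
    rw [zpow_neg, zpow_natCast, ← hk, one_div]
  have hA : V (br (1 - 2 ^ (-(k : ℤ)))) - c (br (1 - 2 ^ (-(k : ℤ)))) ≤ 2 * (k : ℝ) * LIN :=
    hmain k hk1
  have hB : ∀ a : A, (V a - c a)
      - (V (br (1 - 2 ^ (-(k : ℤ)))) - c (br (1 - 2 ^ (-(k : ℤ))))) ≤ 2 * ε := by
    intro a
    have h1 := hbr (1 - 2 ^ (-(k : ℤ))) a
    rw [hek] at h1 ⊢
    have ha := hV a
    have hVk := hV (br (1 - ε))
    have h2 : ε * V a ≤ ε := mul_le_of_le_one_right hε0.le ha.2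
    have h3 : 0 ≤ ε * V (br (1 - ε)) := mul_nonneg hε0.le hVk.1
    nlinarith [h1]
  refine ⟨hA, hB, ?_⟩
  obtain ⟨a, ha⟩ := hOPT
  have := hB a
  linarith
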